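/- Let f : V → W be a linear map of finite-dimensional vector spaces over a field K, and let k be a natural number. Then the rank of the induced map Λ^k f : Λ^k V → Λ^k W on k-th exterior powers equals the binomial coefficient C(rank(f), k). -/

import Mathlib

open Module

section Aux

open ExteriorAlgebra

variable {K V : Type*} [Field K] [AddCommGroup V] [Module K V]


lemma span_ιMulti_family (k : ℕ) {I : Type*} [Fintype I] [LinearOrder I] (b : Basis I K V) :
    Submodule.span K (Set.range (ιMulti_family K k (fun i => b i))) = ⋀[K]^k V := by
  classical
  refine le_antisymm (Submodule.span_le.2 ?_) ?_
  · rintro _ ⟨s, rfl⟩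
    exact ιMulti_range K k ⟨_, rfl⟩
  · rw [← ιMulti_span_fixedDegree, Submodule.span_le]
    rintro _ ⟨v, rfl⟩
    have h0 : (ιMulti K k v : ExteriorAlgebra K V) =
        (ιMulti K k).toMultilinearMap (fun i => ∑ j : I, b.repr (v i) j • b j) := by
      have h1 : v = fun i => ∑ j : I, b.repr (v i) j • b j :=
        funext fun i => (Basis.sum_repr b (v i)).symm
      conv_lhs => rw [h1]
      rfl
    rw [h0, MultilinearMap.map_sum]
    apply Submodule.sum_mem
    intro r _
    rw [MultilinearMap.map_smul_univ]
    apply Submodule.smul_mem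
    by_cases hr : Function.Injective r
    · set s : Finset I := Finset.univ.image r with hs
      have hcard : s.card = k := by
        rw [hs, Finset.card_image_of_injective _ hr, Finset.card_univ, Fintype.card_fin]
      have hset : Set.range r = ↑s := by
        rw [hs, Finset.coe_image, Finset.coe_univ, Set.image_univ]
      set σ : Fin k ≃ Fin k :=
        (Equiv.ofInjective r hr).trans
          ((Equiv.setCongr hset).trans (Finset.orderIsoOfFin s hcard).toEquiv.symm) with hσ
      have hcomp : (fun i => b (r i)) =
          (fun i => b ((Finset.orderIsoOfFin s hcard) i)) ∘ σ := by
        ext i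
        simp only [Function.comp_apply, hσ, Equiv.trans_apply]
        congr 1
        have : ((Finset.orderIsoOfFin s hcard) ((Finset.orderIsoOfFin s hcard).toEquiv.symm
            ((Equiv.setCongr hset) (Equiv.ofInjective r hr i))) : I) = r i := by
          rw [show (s.orderIsoOfFin hcard).toEquiv.symm = (s.orderIsoOfFin hcard).symm.toEquiv
            from rfl]
          rw [show (((s.orderIsoOfFin hcard).symm.toEquiv) ((Equiv.setCongr hset) ((Equiv.ofInjective r hr) i))) = ((s.orderIsoOfFin hcard).symm ((Equiv.setCongr hset) ((Equiv.ofInjective r hr) i))) from rfl, OrderIso.apply_symm_apply]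
          rfl
        exact this.symm
      show ((ιMulti K k) fun i => b (r i)) ∈ _
      rw [hcomp, AlternatingMap.map_perm]
      have hmem : ((ιMulti K k) fun i => b ((Finset.orderIsoOfFin s hcard) i)) ∈
          Submodule.span K (Set.range (ιMulti_family K k (fun i => b i))) :=
        Submodule.subset_span ⟨⟨s, hcard⟩, rfl⟩
      rcases Int.units_eq_one_or (Equiv.Perm.sign σ) with h | h <;> rw [h]
      · simpa using hmem
      · rw [show ((-1 : ℤˣ) • ((ιMulti K k) fun i => b ((Finset.orderIsoOfFin s hcard) i)))
            = -((ιMulti K k) fun i => b ((Finset.orderIsoOfFin s hcard) i)) by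
          simp [Units.smul_def]]
        exact neg_mem hmem
    · show ((ιMulti K k) fun i => b (r i)) ∈ _
      rw [AlternatingMap.map_eq_zero_of_not_injective _ _
        (fun h => hr fun x y hxy => h (congrArg b hxy))]
      exact Submodule.zero_mem _

lemma linearIndependent_ιMulti_family (k : ℕ) {I : Type*} [Fintype I] [LinearOrder I]
    (b : Basis I K V) :
    LinearIndependent K (ιMulti_family K k (fun i => b i)) := by
  classical
  -- dual functionals
  set A : Set.powersetCard I k → (V [⋀^Fin k]→ₗ[K] K) := fun s =>
    (Matrix.detRowAlternating (n := Fin k) (R := K)).compLinearMap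
      (LinearMap.pi (fun j => b.coord (Finset.orderIsoOfFin s.1 s.2 j))) with hA
  set φ : Set.powersetCard I k → (ExteriorAlgebra K V →ₗ[K] K) := fun s =>
    liftAlternating (Pi.single k (A s)) with hφ
  have hdelta : ∀ s t, φ s (ιMulti_family K k (fun i => b i) t) = if s = t then 1 else 0 := by
    intro s t
    rw [hφ]
    simp only
    rw [show ιMulti_family K k (fun i => b i) t
        = ιMulti K k (fun i => b (Finset.orderIsoOfFin t.1 t.2 i)) from rfl]
    rw [liftAlternating_apply_ιMulti, Pi.single_eq_same]
    rw [hA]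
    simp only [AlternatingMap.compLinearMap_apply]
    rw [show (fun i => LinearMap.pi (fun j => b.coord (Finset.orderIsoOfFin s.1 s.2 j))
          (b (Finset.orderIsoOfFin t.1 t.2 i)))
        = Matrix.of (fun i j => b.coord (Finset.orderIsoOfFin s.1 s.2 j)
          (b (Finset.orderIsoOfFin t.1 t.2 i))) from rfl]
    have hentry : ∀ i j, b.coord (Finset.orderIsoOfFin s.1 s.2 j)
        (b (Finset.orderIsoOfFin t.1 t.2 i))
        = if ((Finset.orderIsoOfFin t.1 t.2 i) : I) = (Finset.orderIsoOfFin s.1 s.2 j) then 1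
          else 0 := by
      intro i j
      rw [Basis.coord_apply, Basis.repr_self, Finsupp.single_apply]
    by_cases hst : s = t
    · subst hst
      rw [if_pos rfl]
      rw [show Matrix.of (fun i j => b.coord (Finset.orderIsoOfFin s.1 s.2 j)
            (b (Finset.orderIsoOfFin s.1 s.2 i))) = (1 : Matrix (Fin k) (Fin k) K) by
        ext i j
        rw [Matrix.of_apply, hentry, Matrix.one_apply]
        by_cases h : i = j
        · subst h; rw [if_pos rfl, if_pos rfl]
        · rw [if_neg (fun hc => h (by
            have := (Finset.orderIsoOfFin s.1 s.2).injective (Subtype.ext hc)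
            exact this)), if_neg h]]
      exact Matrix.det_one
    · rw [if_neg hst]
      have hex : ∃ x, x ∈ s.1 ∧ x ∉ t.1 := by
        by_contra hc
        push_neg at hc
        have hsub : s.1 ⊆ t.1 := fun x hx => hc x hx
        have : s.1 = t.1 := Finset.eq_of_subset_of_card_le hsub (by rw [s.2, t.2])
        exact hst (Subtype.ext this)
      obtain ⟨x, hxs, hxt⟩ := hex
      set j0 := (Finset.orderIsoOfFin s.1 s.2).symm ⟨x, hxs⟩ with hj0
      apply Matrix.det_eq_zero_of_column_eq_zero j0
      intro i
      rw [Matrix.of_apply, hentry, hj0, OrderIso.apply_symm_apply, if_neg]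
      intro hc
      have hmem : ((Finset.orderIsoOfFin t.1 t.2 i : I)) ∈ t.1 :=
        (Finset.orderIsoOfFin t.1 t.2 i).2
      rw [hc] at hmem
      exact hxt hmem
  rw [Fintype.linearIndependent_iff]
  intro c hc s
  have := congrArg (φ s) hc
  rw [map_sum, map_zero] at this
  simp only [map_smul, hdelta, smul_eq_mul, mul_ite, mul_one, mul_zero] at this
  rwa [Finset.sum_ite_eq Finset.univ s c, if_pos (Finset.mem_univ s)] at this

lemma finrank_exteriorPower_submodule [FiniteDimensional K V] (k : ℕ) :
    finrank K (⋀[K]^k V) = (finrank K V).choose k := by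
  classical
  set b := finBasis K V with hb
  rw [← span_ιMulti_family k b, finrank_span_eq_card (linearIndependent_ιMulti_family k b),
    Fintype.card_eq_nat_card, Set.powersetCard.card, Nat.card_eq_fintype_card,
    Fintype.card_fin]


end Aux

/-- The rank of the map `Λᵏ f` induced on `k`-th exterior powers by a linear map
`f : V → W` of finite-dimensional vector spaces equals the binomial coefficient
`C(rank f, k)`. Here `g` is the induced map, characterized by compatibility with
the functorial map `ExteriorAlgebra.map f` of exterior algebras. -/
theorem rank_exteriorPower_map_eq_choose
    {K V W : Type*} [Field K] [AddCommGroup V] [Module K V] [FiniteDimensional K V]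
    [AddCommGroup W] [Module K W] [FiniteDimensional K W]
    (k : ℕ) (f : V →ₗ[K] W)
    (g : ⋀[K]^k V →ₗ[K] ⋀[K]^k W)
    (hg : ∀ x : ⋀[K]^k V, (g x : ExteriorAlgebra K W) = ExteriorAlgebra.map f x) :
    finrank K (LinearMap.range g) = (finrank K (LinearMap.range f)).choose k := by
  classical
  set V' := LinearMap.range f with hV'
  set f₀ : V →ₗ[K] V' := f.rangeRestrict with hf₀
  set F : ⋀[K]^k V →ₗ[K] ExteriorAlgebra K W :=
    (ExteriorAlgebra.map f).toLinearMap ∘ₗ (⋀[K]^k V).subtype with hF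
  set F' : ⋀[K]^k V →ₗ[K] ExteriorAlgebra K V' :=
    (ExteriorAlgebra.map f₀).toLinearMap ∘ₗ (⋀[K]^k V).subtype with hF'
  have h1 : (⋀[K]^k W).subtype ∘ₗ g = F := by
    refine LinearMap.ext fun x => ?_
    exact hg x
  have h2 : finrank K (LinearMap.range g) = finrank K (LinearMap.range F) := by
    rw [← h1, LinearMap.range_comp]
    exact (Submodule.equivMapOfInjective _ (Submodule.injective_subtype _) _).finrank_eq
  have hif : V'.subtype ∘ₗ f₀ = f := f.subtype_comp_codRestrict _ _
  have h3 : F = (ExteriorAlgebra.map V'.subtype).toLinearMap ∘ₗ F' := by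
    rw [hF, hF', ← LinearMap.comp_assoc, ← AlgHom.comp_toLinearMap,
      ExteriorAlgebra.map_comp_map, hif]
  obtain ⟨r, hr⟩ := V'.subtype.exists_leftInverse_of_injective
    (Submodule.ker_subtype _)
  have hinj : Function.Injective (ExteriorAlgebra.map V'.subtype).toLinearMap :=
    ExteriorAlgebra.map_injective ⟨r, hr⟩
  have h4 : finrank K (LinearMap.range F) = finrank K (LinearMap.range F') := by
    rw [h3, LinearMap.range_comp]
    exact (Submodule.equivMapOfInjective _ hinj _).finrank_eq.symm
  have hsurj : Function.Surjective f₀ := f.surjective_rangeRestrict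
  have h5 : LinearMap.range F' = ⋀[K]^k V' := by
    rw [hF', LinearMap.range_comp, Submodule.range_subtype,
      ← ExteriorAlgebra.ιMulti_span_fixedDegree K k (M := V),
      ← ExteriorAlgebra.ιMulti_span_fixedDegree K k (M := V'),
      Submodule.map_span]
    congr 1
    ext y
    constructor
    · rintro ⟨_, ⟨v, rfl⟩, rfl⟩
      exact ⟨f₀ ∘ v, (ExteriorAlgebra.map_apply_ιMulti f₀ v).symm⟩
    · rintro ⟨w, rfl⟩
      refine ⟨ExteriorAlgebra.ιMulti K k (fun i => (hsurj (w i)).choose), ⟨_, rfl⟩, ?_⟩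
      show (ExteriorAlgebra.map f₀) _ = _
      rw [ExteriorAlgebra.map_apply_ιMulti]
      congr 1
      exact funext fun i => (hsurj (w i)).choose_spec
  have h6 : finrank K (LinearMap.range F') = finrank K (⋀[K]^k V') := by rw [h5]
  rw [h2, h4, h6, finrank_exteriorPower_submodule]
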